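/- Let π be a group and k ≥ 1. Let A_k denote the kernel of the natural homomorphism Aut(π) → Aut(π/Γ_{k+1}π). Then for every f ∈ A_k and x ∈ π one has x⁻¹f(x) ∈ Γ_{k+1}π; the assignment (x mod Γ₂π) ↦ (x⁻¹f(x) mod Γ_{k+2}π) is a well-defined group homomorphism τ_k(f) : π/Γ₂π → Γ_{k+1}π/Γ_{k+2}π; the resulting map τ_k : A_k → Hom(π/Γ₂π, Γ_{k+1}π/Γ_{k+2}π) is a group homomorphism; and τ_k(f) = 0 if and only if f induces the identity automorphism of π/Γ_{k+2}π. -/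

import Mathlib

open QuotientGroup Subgroup
open scoped commutatorElement

section Aux
variable {π : Type*} [Group π] {k : ℕ}

private lemma lcs_succ_comm (π : Type*) [Group π] (k : ℕ) :
    (⊤ : Subgroup π).lowerCentralSeries (k + 1) = ⁅(⊤ : Subgroup π).lowerCentralSeries k, ⊤⁆ := rfl

private lemma central_aux (a : π) (ha : a ∈ (⊤ : Subgroup π).lowerCentralSeries k)
    (u : π ⧸ (⊤ : Subgroup π).lowerCentralSeries (k + 1)) :
    Commute (QuotientGroup.mk a) u := by
  induction u using QuotientGroup.induction_on with
  | H u =>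
    show (QuotientGroup.mk a : π ⧸ (⊤ : Subgroup π).lowerCentralSeries (k+1)) * QuotientGroup.mk u
        = QuotientGroup.mk u * QuotientGroup.mk a
    rw [← QuotientGroup.mk_mul, ← QuotientGroup.mk_mul, QuotientGroup.eq]
    have h : (a * u)⁻¹ * (u * a) = ⁅u⁻¹, a⁻¹⁆ := by group
    rw [h, lcs_succ_comm, Subgroup.commutator_comm]
    exact Subgroup.commutator_mem_commutator (Subgroup.mem_top _)
      (Subgroup.inv_mem _ ha)

private lemma mem_lcs_k (f : π ≃* π)
    (hf : ∀ x : π, (QuotientGroup.mk (f x) : π ⧸ (⊤ : Subgroup π).lowerCentralSeries k)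
      = QuotientGroup.mk x) (x : π) : x⁻¹ * f x ∈ (⊤ : Subgroup π).lowerCentralSeries k :=
  (QuotientGroup.eq).mp (hf x).symm

/-- The crossed-homomorphism-turned-homomorphism `x ↦ x⁻¹ f x` mod `Γ_{k+2}`. -/
private def dHom (f : π ≃* π)
    (hf : ∀ x : π, (QuotientGroup.mk (f x) : π ⧸ (⊤ : Subgroup π).lowerCentralSeries k)
      = QuotientGroup.mk x) : π →* π ⧸ (⊤ : Subgroup π).lowerCentralSeries (k + 1) where
  toFun x := QuotientGroup.mk (x⁻¹ * f x)
  map_one' := by simp; rfl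
  map_mul' x y := by
    have h1 : (x * y)⁻¹ * f (x * y) = y⁻¹ * ((x⁻¹ * f x) * (y * (y⁻¹ * f y))) := by
      rw [map_mul]; group
    have hc := central_aux (k := k) (x⁻¹ * f x) (mem_lcs_k f hf x)
      (QuotientGroup.mk (y * (y⁻¹ * f y)))
    calc (QuotientGroup.mk ((x * y)⁻¹ * f (x * y)) : π ⧸ (⊤ : Subgroup π).lowerCentralSeries (k+1))
        = QuotientGroup.mk y⁻¹ * (QuotientGroup.mk (x⁻¹ * f x)
            * QuotientGroup.mk (y * (y⁻¹ * f y))) := by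
          rw [h1]; simp only [← QuotientGroup.mk_mul, ← QuotientGroup.mk_inv, mul_assoc]
      _ = QuotientGroup.mk y⁻¹ * (QuotientGroup.mk (y * (y⁻¹ * f y))
            * QuotientGroup.mk (x⁻¹ * f x)) := by rw [hc]
      _ = QuotientGroup.mk (x⁻¹ * f x) * QuotientGroup.mk (y⁻¹ * f y) := by
          rw [← QuotientGroup.mk_mul, ← QuotientGroup.mk_mul]
          have : y⁻¹ * (y * (y⁻¹ * f y) * (x⁻¹ * f x))
              = (y⁻¹ * f y) * (x⁻¹ * f x) := by group
          rw [this, QuotientGroup.mk_mul]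
          exact (central_aux (k := k) (x⁻¹ * f x) (mem_lcs_k f hf x) _).symm

private lemma dHom_ker (f : π ≃* π)
    (hf : ∀ x : π, (QuotientGroup.mk (f x) : π ⧸ (⊤ : Subgroup π).lowerCentralSeries k)
      = QuotientGroup.mk x) :
    (⊤ : Subgroup π).lowerCentralSeries 1 ≤ (dHom f hf).ker := by
  rw [Subgroup.top_lowerCentralSeries_one, commutator_def, Subgroup.commutator_le]
  intro a _ b _
  rw [MonoidHom.mem_ker, map_commutatorElement]
  exact commutatorElement_eq_one_iff_commute.mpr
    (central_aux (k := k) (a⁻¹ * f a) (mem_lcs_k f hf a) _)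

/-- `dHom` kills `Γ_{k+1}` (since `k ≥ 1`): `f` fixes `Γ_{k+1}` mod `Γ_{k+2}`. -/
private lemma dHom_fix (f : π ≃* π)
    (hf : ∀ x : π, (QuotientGroup.mk (f x) : π ⧸ (⊤ : Subgroup π).lowerCentralSeries k)
      = QuotientGroup.mk x) (hk : 1 ≤ k) {a : π} (ha : a ∈ (⊤ : Subgroup π).lowerCentralSeries k) :
    (QuotientGroup.mk (f a) : π ⧸ (⊤ : Subgroup π).lowerCentralSeries (k + 1)) = QuotientGroup.mk a := by
  have h : a ∈ (⊤ : Subgroup π).lowerCentralSeries 1 := (Subgroup.lowerCentralSeries_antitone (S := ⊤)) hk ha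
  have := dHom_ker f hf h
  rw [MonoidHom.mem_ker] at this
  have h2 : (QuotientGroup.mk (a⁻¹ * f a) : π ⧸ (⊤ : Subgroup π).lowerCentralSeries (k+1)) = 1 := this
  rw [QuotientGroup.eq_one_iff] at h2
  have h3 := inv_mem h2
  rw [mul_inv_rev, inv_inv] at h3
  exact (QuotientGroup.eq).mpr h3

end Aux

theorem stmt3 (π : Type*) [Group π] (k : ℕ) (hk : 1 ≤ k)
    (A : Subgroup (π ⧸ (⊤ : Subgroup π).lowerCentralSeries (k + 1)))
    (hA : A = ((⊤ : Subgroup π).lowerCentralSeries k).map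
      (QuotientGroup.mk' ((⊤ : Subgroup π).lowerCentralSeries (k + 1)))) :
    -- x⁻¹ f(x) ∈ Γ_{k+1}π, and τ_k(f) is a well-defined homomorphism
    (∀ f : π ≃* π,
      (∀ x : π, (QuotientGroup.mk (f x) : π ⧸ (⊤ : Subgroup π).lowerCentralSeries k)
          = QuotientGroup.mk x) →
      (∀ x : π, x⁻¹ * f x ∈ (⊤ : Subgroup π).lowerCentralSeries k) ∧
      (∃! τ : (π ⧸ (⊤ : Subgroup π).lowerCentralSeries 1) →* (π ⧸ (⊤ : Subgroup π).lowerCentralSeries (k + 1)),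
        (∀ y, τ y ∈ A) ∧
        ∀ x : π, τ (QuotientGroup.mk x) = QuotientGroup.mk (x⁻¹ * f x))) ∧
    -- τ_k is a group homomorphism: τ_k(f ∘ g) = τ_k(f) · τ_k(g)
    (∀ f g : π ≃* π,
      (∀ x : π, (QuotientGroup.mk (f x) : π ⧸ (⊤ : Subgroup π).lowerCentralSeries k)
          = QuotientGroup.mk x) →
      (∀ x : π, (QuotientGroup.mk (g x) : π ⧸ (⊤ : Subgroup π).lowerCentralSeries k)
          = QuotientGroup.mk x) →
      ∀ τf τg τfg : (π ⧸ (⊤ : Subgroup π).lowerCentralSeries 1) →* (π ⧸ (⊤ : Subgroup π).lowerCentralSeries (k + 1)),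
        (∀ x : π, τf (QuotientGroup.mk x) = QuotientGroup.mk (x⁻¹ * f x)) →
        (∀ x : π, τg (QuotientGroup.mk x) = QuotientGroup.mk (x⁻¹ * g x)) →
        (∀ x : π, τfg (QuotientGroup.mk x) = QuotientGroup.mk (x⁻¹ * f (g x))) →
        ∀ y, τfg y = τf y * τg y) ∧
    -- τ_k(f) = 0 iff f induces the identity automorphism of π/Γ_{k+2}π
    (∀ f : π ≃* π,
      (∀ x : π, (QuotientGroup.mk (f x) : π ⧸ (⊤ : Subgroup π).lowerCentralSeries k)
          = QuotientGroup.mk x) →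
      ∀ τ : (π ⧸ (⊤ : Subgroup π).lowerCentralSeries 1) →* (π ⧸ (⊤ : Subgroup π).lowerCentralSeries (k + 1)),
        (∀ x : π, τ (QuotientGroup.mk x) = QuotientGroup.mk (x⁻¹ * f x)) →
        ((∀ y, τ y = 1) ↔
          ∀ x : π, (QuotientGroup.mk (f x) : π ⧸ (⊤ : Subgroup π).lowerCentralSeries (k + 1))
            = QuotientGroup.mk x)) := by
  refine ⟨?_, ?_, ?_⟩
  · intro f hf
    refine ⟨mem_lcs_k f hf, ?_⟩
    refine ⟨QuotientGroup.lift _ (dHom f hf) (dHom_ker f hf), ⟨?_, fun x => rfl⟩, ?_⟩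
    · intro y
      induction y using QuotientGroup.induction_on with
      | H x =>
        rw [hA]
        exact ⟨x⁻¹ * f x, mem_lcs_k f hf x, rfl⟩
    · intro τ' ⟨_, hτ'⟩
      refine DFunLike.ext _ _ fun y => ?_
      induction y using QuotientGroup.induction_on with
      | H x => exact hτ' x
  · intro f g hf hg τf τg τfg hτf hτg hτfg y
    induction y using QuotientGroup.induction_on with
    | H x =>
      rw [hτfg x, hτf x, hτg x]
      have ha : x⁻¹ * g x ∈ (⊤ : Subgroup π).lowerCentralSeries k := mem_lcs_k g hg x
      have h1 : x⁻¹ * f (g x) = (x⁻¹ * f x) * f (x⁻¹ * g x) := by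
        rw [map_mul, map_inv]; group
      rw [h1, QuotientGroup.mk_mul, dHom_fix f hf hk ha]
  · intro f hf τ hτ
    constructor
    · intro h x
      have := h (QuotientGroup.mk x)
      rw [hτ x, QuotientGroup.eq_one_iff] at this
      have h3 := inv_mem this
      rw [mul_inv_rev, inv_inv] at h3
      exact (QuotientGroup.eq).mpr h3
    · intro h y
      induction y using QuotientGroup.induction_on with
      | H x =>
        rw [hτ x, QuotientGroup.eq_one_iff]
        have h3 := inv_mem ((QuotientGroup.eq).mp (h x))
        rwa [mul_inv_rev, inv_inv] at h3
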